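/- Let w and x be nonnegative integers with w positive. Suppose there exists a family of B subsets (blocks) of a point set {1,…,V} such that every point occurs in exactly R blocks, every pair of distinct points occurs in exactly Λ blocks, R² = Λ·B, and every block has cardinality congruent to x modulo w. Then there exists a set of V mutually orthogonal binary frequency squares of type (B+VR; B+VR−R, R) whose entrywise integer sum is congruent, modulo w, to the block matrix of order B+VR with x·J_B in the top-left B×B corner, the all-ones matrix J_{VR} in the bottom-right VR×VR corner, and zeros elsewhere. -/

import Mathlib

open Finset

/-- A binary frequency square of type `(n; n - lam1, lam1)`: an `n × n` `(0,1)`-matrix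
with exactly `lam1` ones (hence `n - lam1` zeros) in every row and every column. -/
def IsBFS (n lam1 : ℕ) (F : Fin n → Fin n → ℕ) : Prop :=
  (∀ i j, F i j = 0 ∨ F i j = 1) ∧
  (∀ i : Fin n, (univ.filter (fun j => F i j = 1)).card = lam1) ∧
  (∀ j : Fin n, (univ.filter (fun i => F i j = 1)).card = lam1)

/-- Two binary frequency squares (with `lam1` resp. `mu1` ones per row and column)
are orthogonal: the number of cells in which both have entry 1 equals `lam1 * mu1`. -/
def OrthBFS (n lam1 mu1 : ℕ) (F G : Fin n → Fin n → ℕ) : Prop :=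
  ((univ : Finset (Fin n × Fin n)).filter
    (fun p => F p.1 p.2 = 1 ∧ G p.1 p.2 = 1)).card = lam1 * mu1

namespace Stmt17Aux

lemma count_shift (B M a : ℕ) (hB : 0 < B) (ha : a < B)
    (P : ℕ → Prop) [DecidablePred P] :
    (univ.filter (fun j : Fin (B + M) => (j : ℕ) < B ∧ P ((a + (j : ℕ)) % B))).card
      = (univ.filter (fun k : Fin B => P (k : ℕ))).card := by
  apply Finset.card_nbij'
    (i := fun j : Fin (B + M) => (⟨(a + (j : ℕ)) % B, Nat.mod_lt _ hB⟩ : Fin B))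
    (j := fun k : Fin B =>
      (⟨((k : ℕ) + (B - a)) % B,
        lt_of_lt_of_le (Nat.mod_lt _ hB) (Nat.le_add_right _ _)⟩ : Fin (B + M)))
  · intro j hj
    simp only [mem_coe, mem_filter, mem_univ, true_and] at hj ⊢
    exact hj.2
  · intro k hk
    simp only [mem_coe, mem_filter, mem_univ, true_and] at hk ⊢
    have h1 : (a + ((k : ℕ) + (B - a)) % B) % B = (k : ℕ) := by
      rw [Nat.add_mod_mod]
      have : a + ((k : ℕ) + (B - a)) = (k : ℕ) + B := by omega
      rw [this, Nat.add_mod_right, Nat.mod_eq_of_lt k.isLt]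
    constructor
    · exact Nat.mod_lt _ hB
    · rw [h1]; exact hk
  · intro j hj
    simp only [mem_coe, mem_filter, mem_univ, true_and] at hj
    apply Fin.ext
    show ((a + (j : ℕ)) % B + (B - a)) % B = (j : ℕ)
    rw [Nat.mod_add_mod]
    have : a + (j : ℕ) + (B - a) = (j : ℕ) + B := by omega
    rw [this, Nat.add_mod_right, Nat.mod_eq_of_lt hj.1]
  · intro k hk
    apply Fin.ext
    show (a + ((k : ℕ) + (B - a)) % B) % B = (k : ℕ)
    rw [Nat.add_mod_mod]
    have : a + ((k : ℕ) + (B - a)) = (k : ℕ) + B := by omega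
    rw [this, Nat.add_mod_right, Nat.mod_eq_of_lt k.isLt]

lemma count_band (B V R c : ℕ) (hR : 0 < R) (hc : c < V) :
    (univ.filter (fun j : Fin (B + V * R) =>
      B ≤ (j : ℕ) ∧ ((j : ℕ) - B) / R = c)).card = R := by
  have hlt : ∀ s : Fin R, B + (c * R + (s : ℕ)) < B + V * R := by
    intro s
    have h1 : c * R + (s : ℕ) < (c + 1) * R := by
      have := s.isLt; nlinarith
    have h2 : (c + 1) * R ≤ V * R := Nat.mul_le_mul_right _ hc
    omega
  have key : (univ.filter (fun j : Fin (B + V * R) =>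
      B ≤ (j : ℕ) ∧ ((j : ℕ) - B) / R = c)).card = (univ : Finset (Fin R)).card := by
    apply Finset.card_nbij'
      (i := fun j : Fin (B + V * R) => (⟨((j : ℕ) - B) % R, Nat.mod_lt _ hR⟩ : Fin R))
      (j := fun s : Fin R => (⟨B + (c * R + (s : ℕ)), hlt s⟩ : Fin (B + V * R)))
    · intro j _; exact mem_univ _
    · intro s _
      simp only [mem_coe, mem_filter, mem_univ, true_and]
      refine ⟨Nat.le_add_right _ _, ?_⟩
      have : B + (c * R + (s : ℕ)) - B = R * c + (s : ℕ) := by ring_nf; omega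
      rw [this, Nat.mul_add_div hR, Nat.div_eq_of_lt s.isLt]
      omega
    · intro j hj
      simp only [mem_coe, mem_filter, mem_univ, true_and] at hj
      apply Fin.ext
      show B + (c * R + ((j : ℕ) - B) % R) = (j : ℕ)
      have hdm := Nat.div_add_mod ((j : ℕ) - B) R
      rw [hj.2] at hdm
      have hmul : R * c = c * R := Nat.mul_comm _ _
      have hmod := Nat.mod_lt ((j : ℕ) - B) hR
      omega
    · intro s _
      apply Fin.ext
      show (B + (c * R + (s : ℕ)) - B) % R = (s : ℕ)
      have : B + (c * R + (s : ℕ)) - B = c * R + (s : ℕ) := by omega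
      rw [this, Nat.mul_comm c R, Nat.mul_add_mod, Nat.mod_eq_of_lt s.isLt]
  rw [key]; simp

lemma uniq_shift {Vn p t q : ℕ} (hp : p < Vn) (ht : t < Vn) (hq : q < Vn) :
    (p + t) % Vn = q ↔ p = (q + (Vn - t)) % Vn := by
  constructor
  · rintro rfl
    rw [Nat.mod_add_mod]
    have : p + t + (Vn - t) = p + Vn := by omega
    rw [this, Nat.add_mod_right, Nat.mod_eq_of_lt hp]
  · rintro rfl
    rw [Nat.mod_add_mod]
    have : q + (Vn - t) + t = q + Vn := by omega
    rw [this, Nat.add_mod_right, Nat.mod_eq_of_lt hq]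

lemma count_prod0 (B M : ℕ) (hB : 0 < B) (Q : ℕ → Prop) [DecidablePred Q] :
    ((univ : Finset (Fin (B + M) × Fin (B + M))).filter
      (fun p => (p.1 : ℕ) < B ∧ (p.2 : ℕ) < B ∧ Q (((p.1 : ℕ) + (p.2 : ℕ)) % B))).card
      = B * (univ.filter (fun k : Fin B => Q (k : ℕ))).card := by
  rw [show B * (univ.filter (fun k : Fin B => Q (k : ℕ))).card
      = ((univ : Finset (Fin B)) ×ˢ (univ.filter (fun k : Fin B => Q (k : ℕ)))).card by
    rw [Finset.card_product]; simp]
  apply Finset.card_nbij'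
    (i := fun p : Fin (B + M) × Fin (B + M) =>
      ((⟨(p.1 : ℕ) % B, Nat.mod_lt _ hB⟩ : Fin B),
       (⟨((p.1 : ℕ) + (p.2 : ℕ)) % B, Nat.mod_lt _ hB⟩ : Fin B)))
    (j := fun q : Fin B × Fin B =>
      ((⟨(q.1 : ℕ), lt_of_lt_of_le q.1.isLt (Nat.le_add_right _ _)⟩ : Fin (B + M)),
       (⟨((q.2 : ℕ) + (B - (q.1 : ℕ))) % B,
         lt_of_lt_of_le (Nat.mod_lt _ hB) (Nat.le_add_right _ _)⟩ : Fin (B + M))))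
  · intro p hp
    simp only [mem_coe, mem_filter, mem_univ, true_and, Finset.mem_product] at hp ⊢
    simpa using hp.2.2
  · intro q hq
    simp only [mem_coe, Finset.mem_product, mem_filter, mem_univ, true_and] at hq ⊢
    have h1 : ((q.1 : ℕ) + ((q.2 : ℕ) + (B - (q.1 : ℕ))) % B) % B = (q.2 : ℕ) := by
      rw [Nat.add_mod_mod]
      have : (q.1 : ℕ) + ((q.2 : ℕ) + (B - (q.1 : ℕ))) = (q.2 : ℕ) + B := by
        have := q.1.isLt; omega
      rw [this, Nat.add_mod_right, Nat.mod_eq_of_lt q.2.isLt]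
    exact ⟨q.1.isLt, Nat.mod_lt _ hB, by rw [h1]; exact hq⟩
  · intro p hp
    simp only [mem_coe, mem_filter, mem_univ, true_and] at hp
    have e1 : (p.1 : ℕ) % B = (p.1 : ℕ) := Nat.mod_eq_of_lt hp.1
    apply Prod.ext
    · apply Fin.ext; exact e1
    · apply Fin.ext
      show (((p.1 : ℕ) + (p.2 : ℕ)) % B + (B - (p.1 : ℕ) % B)) % B = (p.2 : ℕ)
      rw [e1, Nat.mod_add_mod]
      have : (p.1 : ℕ) + (p.2 : ℕ) + (B - (p.1 : ℕ)) = (p.2 : ℕ) + B := by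
        have := hp.1; omega
      rw [this, Nat.add_mod_right, Nat.mod_eq_of_lt hp.2.1]
  · intro q hq
    have e1 : (q.1 : ℕ) % B = (q.1 : ℕ) := Nat.mod_eq_of_lt q.1.isLt
    apply Prod.ext
    · apply Fin.ext; exact e1
    · apply Fin.ext
      show ((q.1 : ℕ) + ((q.2 : ℕ) + (B - (q.1 : ℕ))) % B) % B = (q.2 : ℕ)
      rw [Nat.add_mod_mod]
      have : (q.1 : ℕ) + ((q.2 : ℕ) + (B - (q.1 : ℕ))) = (q.2 : ℕ) + B := by
        have := q.1.isLt; omega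
      rw [this, Nat.add_mod_right, Nat.mod_eq_of_lt q.2.isLt]

lemma count_prod (B M : ℕ) (Q : ℕ → Prop) [DecidablePred Q] :
    ((univ : Finset (Fin (B + M) × Fin (B + M))).filter
      (fun p => (p.1 : ℕ) < B ∧ (p.2 : ℕ) < B ∧ Q (((p.1 : ℕ) + (p.2 : ℕ)) % B))).card
      = B * (univ.filter (fun k : Fin B => Q (k : ℕ))).card := by
  rcases Nat.eq_zero_or_pos B with hB | hB
  · subst hB
    simp
  · exact count_prod0 B M hB Q

end Stmt17Aux

theorem stmt17 (w x V B R L : ℕ) (hw : 0 < w) (b : Fin B → Finset (Fin V))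
    (hR : ∀ p : Fin V, (univ.filter (fun j : Fin B => p ∈ b j)).card = R)
    (hL : ∀ p q : Fin V, p ≠ q →
      (univ.filter (fun j : Fin B => p ∈ b j ∧ q ∈ b j)).card = L)
    (hDK : R ^ 2 = L * B)
    (hsize : ∀ j : Fin B, (b j).card ≡ x [MOD w]) :
    ∃ F : Fin V → Fin (B + V * R) → Fin (B + V * R) → ℕ,
      (∀ t, IsBFS (B + V * R) R (F t)) ∧
      (∀ s t, s ≠ t → OrthBFS (B + V * R) R R (F s) (F t)) ∧
      (∀ i j : Fin (B + V * R),
        (∑ t, F t i j) ≡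
          (if (i : ℕ) < B ∧ (j : ℕ) < B then x
           else if B ≤ (i : ℕ) ∧ B ≤ (j : ℕ) then 1 else 0) [MOD w]) := by
  classical
  set bb : ℕ → Finset (Fin V) := fun k => if h : k < B then b ⟨k, h⟩ else ∅ with hbbdef
  have hbb : ∀ (k : ℕ) (hk : k < B), bb k = b ⟨k, hk⟩ := by
    intro k hk; simp [hbbdef, hk]
  have facts : ∀ i : Fin (B + V * R), B ≤ (i : ℕ) →
      0 < V ∧ 0 < R ∧ ((i : ℕ) - B) / R < V := by
    intro i hi
    have h1 : (i : ℕ) < B + V * R := i.isLt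
    have hVR : 0 < V * R := by omega
    have hV : 0 < V := by
      rcases Nat.eq_zero_or_pos V with h | h
      · subst h; simp at hVR
      · exact h
    have hR0 : 0 < R := by
      rcases Nat.eq_zero_or_pos R with h | h
      · subst h; simp at hVR
      · exact h
    exact ⟨hV, hR0, (Nat.div_lt_iff_lt_mul hR0).2 (by omega)⟩
  have hRbb : ∀ t : Fin V, (univ.filter (fun k : Fin B => t ∈ bb (k : ℕ))).card = R := by
    intro t
    rw [← hR t]
    apply congrArg Finset.card
    apply filter_congr
    intro k _
    simp [hbb _ k.isLt]
  refine ⟨fun t i j =>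
      if (i : ℕ) < B then
        if (j : ℕ) < B then (if t ∈ bb (((i : ℕ) + (j : ℕ)) % B) then 1 else 0) else 0
      else
        if (j : ℕ) < B then 0
        else if ((j : ℕ) - B) / R = (((i : ℕ) - B) / R + (t : ℕ)) % V then 1 else 0,
    ?_, ?_, ?_⟩
  · -- IsBFS
    intro t
    refine ⟨?_, ?_, ?_⟩
    · intro i j; dsimp only; split_ifs <;> simp
    · -- rows
      intro i
      by_cases hi : (i : ℕ) < B
      · have hB : 0 < B := by omega
        have e : (univ.filter (fun j : Fin (B + V * R) =>
            (if (i : ℕ) < B then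
              if (j : ℕ) < B then (if t ∈ bb (((i : ℕ) + (j : ℕ)) % B) then 1 else 0) else 0
            else
              if (j : ℕ) < B then 0
              else if ((j : ℕ) - B) / R = (((i : ℕ) - B) / R + (t : ℕ)) % V then 1 else 0) = 1))
            = univ.filter (fun j : Fin (B + V * R) =>
                (j : ℕ) < B ∧ t ∈ bb (((i : ℕ) + (j : ℕ)) % B)) := by
          apply filter_congr
          intro j _
          by_cases hj : (j : ℕ) < B <;> simp [hi, hj]
        rw [e]
        exact (Stmt17Aux.count_shift B (V * R) (i : ℕ) hB hi
          (fun m => t ∈ bb m)).trans (hRbb t)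
      · have hBi : B ≤ (i : ℕ) := not_lt.1 hi
        obtain ⟨hV, hR0, hp⟩ := facts i hBi
        have hcV : (((i : ℕ) - B) / R + (t : ℕ)) % V < V := Nat.mod_lt _ hV
        have e : (univ.filter (fun j : Fin (B + V * R) =>
            (if (i : ℕ) < B then
              if (j : ℕ) < B then (if t ∈ bb (((i : ℕ) + (j : ℕ)) % B) then 1 else 0) else 0
            else
              if (j : ℕ) < B then 0
              else if ((j : ℕ) - B) / R = (((i : ℕ) - B) / R + (t : ℕ)) % V then 1 else 0) = 1))
            = univ.filter (fun j : Fin (B + V * R) =>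
                B ≤ (j : ℕ) ∧ ((j : ℕ) - B) / R = (((i : ℕ) - B) / R + (t : ℕ)) % V) := by
          apply filter_congr
          intro j _
          by_cases hj : (j : ℕ) < B
          · simp [hi, hj, not_le.2 hj]
          · simp [hi, hj, not_lt.1 hj]
        rw [e, Stmt17Aux.count_band B V R _ hR0 hcV]
    · -- columns
      intro j
      by_cases hj : (j : ℕ) < B
      · have hB : 0 < B := by omega
        have e : (univ.filter (fun i : Fin (B + V * R) =>
            (if (i : ℕ) < B then
              if (j : ℕ) < B then (if t ∈ bb (((i : ℕ) + (j : ℕ)) % B) then 1 else 0) else 0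
            else
              if (j : ℕ) < B then 0
              else if ((j : ℕ) - B) / R = (((i : ℕ) - B) / R + (t : ℕ)) % V then 1 else 0) = 1))
            = univ.filter (fun i : Fin (B + V * R) =>
                (i : ℕ) < B ∧ t ∈ bb (((j : ℕ) + (i : ℕ)) % B)) := by
          apply filter_congr
          intro i _
          rw [Nat.add_comm (j : ℕ) (i : ℕ)]
          by_cases hi : (i : ℕ) < B <;> simp [hi, hj]
        rw [e]
        exact (Stmt17Aux.count_shift B (V * R) (j : ℕ) hB hj
          (fun m => t ∈ bb m)).trans (hRbb t)
      · have hBj : B ≤ (j : ℕ) := not_lt.1 hj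
        obtain ⟨hV, hR0, hq⟩ := facts j hBj
        have hp0 : (((j : ℕ) - B) / R + (V - (t : ℕ))) % V < V := Nat.mod_lt _ hV
        have e : (univ.filter (fun i : Fin (B + V * R) =>
            (if (i : ℕ) < B then
              if (j : ℕ) < B then (if t ∈ bb (((i : ℕ) + (j : ℕ)) % B) then 1 else 0) else 0
            else
              if (j : ℕ) < B then 0
              else if ((j : ℕ) - B) / R = (((i : ℕ) - B) / R + (t : ℕ)) % V then 1 else 0) = 1))
            = univ.filter (fun i : Fin (B + V * R) =>
                B ≤ (i : ℕ) ∧ ((i : ℕ) - B) / R = (((j : ℕ) - B) / R + (V - (t : ℕ))) % V) := by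
          apply filter_congr
          intro i _
          by_cases hi : (i : ℕ) < B
          · simp [hi, hj, not_le.2 hi]
          · have hip : ((i : ℕ) - B) / R < V := (facts i (not_lt.1 hi)).2.2
            have key : (((j : ℕ) - B) / R = (((i : ℕ) - B) / R + (t : ℕ)) % V)
                ↔ ((i : ℕ) - B) / R = (((j : ℕ) - B) / R + (V - (t : ℕ))) % V := by
              rw [eq_comm]
              exact Stmt17Aux.uniq_shift hip t.isLt hq
            simp [hi, hj, not_lt.1 hi, key]
        rw [e, Stmt17Aux.count_band B V R _ hR0 hp0]
  · -- orthogonality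
    intro s t hst
    unfold OrthBFS
    have hLbb : (univ.filter (fun k : Fin B =>
        s ∈ bb (k : ℕ) ∧ t ∈ bb (k : ℕ))).card = L := by
      rw [← hL s t hst]
      apply congrArg Finset.card
      apply filter_congr
      intro k _
      simp [hbb _ k.isLt]
    have e : ((univ : Finset (Fin (B + V * R) × Fin (B + V * R))).filter
        (fun p =>
          (if (p.1 : ℕ) < B then
            if (p.2 : ℕ) < B then (if s ∈ bb (((p.1 : ℕ) + (p.2 : ℕ)) % B) then 1 else 0) else 0
          else
            if (p.2 : ℕ) < B then 0
            else if ((p.2 : ℕ) - B) / R = (((p.1 : ℕ) - B) / R + (s : ℕ)) % V then 1 else 0) = 1 ∧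
          (if (p.1 : ℕ) < B then
            if (p.2 : ℕ) < B then (if t ∈ bb (((p.1 : ℕ) + (p.2 : ℕ)) % B) then 1 else 0) else 0
          else
            if (p.2 : ℕ) < B then 0
            else if ((p.2 : ℕ) - B) / R = (((p.1 : ℕ) - B) / R + (t : ℕ)) % V then 1 else 0) = 1))
        = (univ : Finset (Fin (B + V * R) × Fin (B + V * R))).filter
            (fun p => (p.1 : ℕ) < B ∧ (p.2 : ℕ) < B ∧
              (s ∈ bb (((p.1 : ℕ) + (p.2 : ℕ)) % B) ∧ t ∈ bb (((p.1 : ℕ) + (p.2 : ℕ)) % B))) := by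
      apply filter_congr
      intro p _
      by_cases h1 : (p.1 : ℕ) < B <;> by_cases h2 : (p.2 : ℕ) < B
      · simp [h1, h2]
      · simp [h1, h2]
      · simp [h1, h2]
      · simp only [if_neg h1, if_neg h2, mem_univ]
        constructor
        · rintro ⟨hs1, ht1⟩
          exfalso
          have hcs : ((p.2 : ℕ) - B) / R = (((p.1 : ℕ) - B) / R + (s : ℕ)) % V := by
            by_contra hc; simp [hc] at hs1
          have hct : ((p.2 : ℕ) - B) / R = (((p.1 : ℕ) - B) / R + (t : ℕ)) % V := by
            by_contra hc; simp [hc] at ht1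
          have hmeq' : (((p.1 : ℕ) - B) / R + (s : ℕ)) ≡
              (((p.1 : ℕ) - B) / R + (t : ℕ)) [MOD V] := by
            unfold Nat.ModEq
            omega
          have hmeq : (s : ℕ) ≡ (t : ℕ) [MOD V] :=
            Nat.ModEq.add_left_cancel' _ hmeq'
          have : (s : ℕ) = (t : ℕ) := by
            have := hmeq
            unfold Nat.ModEq at this
            rw [Nat.mod_eq_of_lt s.isLt, Nat.mod_eq_of_lt t.isLt] at this
            exact this
          exact hst (Fin.ext this)
        · rintro ⟨h, -⟩; exact absurd h h1
    rw [e, Stmt17Aux.count_prod B (V * R)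
        (fun k => s ∈ bb k ∧ t ∈ bb k), hLbb]
    have h1 : R ^ 2 = R * R := sq R
    have h2 : B * L = L * B := Nat.mul_comm _ _
    omega
  · -- sums
    intro i j
    by_cases hi : (i : ℕ) < B <;> by_cases hj : (j : ℕ) < B
    · have hB : 0 < B := by omega
      have hk : ((i : ℕ) + (j : ℕ)) % B < B := Nat.mod_lt _ hB
      have hsum : (∑ t : Fin V,
          (if (i : ℕ) < B then
            if (j : ℕ) < B then (if t ∈ bb (((i : ℕ) + (j : ℕ)) % B) then 1 else 0) else 0
          else
            if (j : ℕ) < B then 0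
            else if ((j : ℕ) - B) / R = (((i : ℕ) - B) / R + (t : ℕ)) % V then 1 else 0))
          = (bb (((i : ℕ) + (j : ℕ)) % B)).card := by
        simp [hi, hj, Finset.sum_boole, Finset.filter_univ_mem]
      rw [hsum, if_pos ⟨hi, hj⟩, hbb _ hk]
      exact hsize _
    · simp only [if_pos hi, if_neg hj, Finset.sum_const_zero]
      rw [if_neg (by omega : ¬((i : ℕ) < B ∧ (j : ℕ) < B)),
        if_neg (by omega : ¬(B ≤ (i : ℕ) ∧ B ≤ (j : ℕ)))]
    · simp only [if_neg hi, if_pos hj, Finset.sum_const_zero]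
      rw [if_neg (by omega : ¬((i : ℕ) < B ∧ (j : ℕ) < B)),
        if_neg (by omega : ¬(B ≤ (i : ℕ) ∧ B ≤ (j : ℕ)))]
    · have hBi : B ≤ (i : ℕ) := not_lt.1 hi
      have hBj : B ≤ (j : ℕ) := not_lt.1 hj
      obtain ⟨hV, hR0, hp⟩ := facts i hBi
      have hq : ((j : ℕ) - B) / R < V := (facts j hBj).2.2
      have hsum : (∑ t : Fin V,
          (if (i : ℕ) < B then
            if (j : ℕ) < B then (if t ∈ bb (((i : ℕ) + (j : ℕ)) % B) then 1 else 0) else 0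
          else
            if (j : ℕ) < B then 0
            else if ((j : ℕ) - B) / R = (((i : ℕ) - B) / R + (t : ℕ)) % V then 1 else 0)) = 1 := by
        simp only [if_neg hi, if_neg hj]
        rw [Finset.sum_boole, Nat.cast_id]
        have hfs : (univ.filter (fun t : Fin V =>
            ((j : ℕ) - B) / R = (((i : ℕ) - B) / R + (t : ℕ)) % V))
            = {(⟨(((j : ℕ) - B) / R + (V - ((i : ℕ) - B) / R)) % V, Nat.mod_lt _ hV⟩ : Fin V)} := by
          ext u
          simp only [mem_filter, mem_univ, true_and, mem_singleton]
          rw [eq_comm, Nat.add_comm (((i : ℕ) - B) / R) (u : ℕ),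
            Stmt17Aux.uniq_shift u.isLt hp hq, Fin.ext_iff]
        rw [hfs, Finset.card_singleton]
      rw [hsum, if_neg (by omega : ¬((i : ℕ) < B ∧ (j : ℕ) < B)),
        if_pos ⟨hBi, hBj⟩]
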